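/- Define the set function f on subsets of [n] by f(S_t) = 1/(1 − α_t), where S_t ⊆ [n] is the set whose characteristic vector encodes the integer t in binary (action i has weight 2^{i−1}), and (α_t) is defined by α_0 = 0, α_{t+1} = α_t + (1/2)(√(4α_t² − 8α_t + 5) − 1). Then f is monotone and submodular: for every S ⊆ T ⊆ [n] and i ∉ T, f(S ∪ {i}) − f(S) ≥ f(T ∪ {i}) − f(T). -/

import Mathlib

noncomputable def alphaSeq : ℕ → ℝ
  | 0 => 0
  | t + 1 => alphaSeq t + (1/2) * (Real.sqrt (4 * (alphaSeq t)^2 - 8 * alphaSeq t + 5) - 1)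

/-- Binary encoding of a subset of `Fin n`: action `i` (zero-based) has weight `2^i`. -/
def enc {n : ℕ} (S : Finset (Fin n)) : ℕ := ∑ i ∈ S, 2 ^ (i : ℕ)

/-- The equal-revenue reward function: `f(S_t) = 1/(1 - α_t)`. -/
noncomputable def fSet {n : ℕ} (S : Finset (Fin n)) : ℝ := 1 / (1 - alphaSeq (enc S))

noncomputable def Bb (t : ℕ) : ℝ := 1 - alphaSeq t

lemma Bb_rec (t : ℕ) : Bb (t+1) = Bb t + 1/2 - Real.sqrt ((Bb t)^2 + 1/4) := by
  have h4 : Real.sqrt 4 = 2 := by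
    rw [show (4:ℝ) = 2^2 by norm_num, Real.sqrt_sq (by norm_num)]
  have he : (4:ℝ) * (alphaSeq t)^2 - 8 * alphaSeq t + 5 = 4 * ((Bb t)^2 + 1/4) := by
    simp only [Bb]; ring
  show 1 - alphaSeq (t+1) = _
  rw [show alphaSeq (t+1) = alphaSeq t + (1/2) * (Real.sqrt (4 * (alphaSeq t)^2 - 8 * alphaSeq t + 5) - 1) from rfl,
    he, Real.sqrt_mul (by norm_num : (0:ℝ) ≤ 4), h4]
  simp only [Bb]; ring

lemma sqrt_ge_half (b : ℝ) : (1:ℝ)/2 ≤ Real.sqrt (b^2 + 1/4) := by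
  have := Real.sqrt_le_sqrt (show (1:ℝ)/4 ≤ b^2 + 1/4 by nlinarith [sq_nonneg b])
  calc (1:ℝ)/2 = Real.sqrt (1/4) := by
        rw [show (1:ℝ)/4 = (1/2)^2 by norm_num, Real.sqrt_sq (by norm_num)]
    _ ≤ _ := this

lemma Bb_pos : ∀ t, 0 < Bb t := by
  intro t
  induction t with
  | zero => simp [Bb, alphaSeq]
  | succ t ih =>
    rw [Bb_rec]
    have hs : Real.sqrt ((Bb t)^2 + 1/4) ^ 2 = (Bb t)^2 + 1/4 :=
      Real.sq_sqrt (by positivity)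
    have hsn : 0 ≤ Real.sqrt ((Bb t)^2 + 1/4) := Real.sqrt_nonneg _
    nlinarith [hs, hsn, ih]

lemma Bb_succ_le (t : ℕ) : Bb (t+1) ≤ Bb t := by
  rw [Bb_rec]
  have := sqrt_ge_half (Bb t)
  linarith

noncomputable def F (t : ℕ) : ℝ := 1 / Bb t

lemma g_eq (t : ℕ) :
    F (t+1) - F t = (Bb t - 1/2 + Real.sqrt ((Bb t)^2 + 1/4)) / Bb t := by
  have hb := Bb_pos t
  have hb' := Bb_pos (t+1)
  set s := Real.sqrt ((Bb t)^2 + 1/4) with hsdef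
  have hs : s^2 = (Bb t)^2 + 1/4 := Real.sq_sqrt (by positivity)
  have hprod : Bb (t+1) * (Bb t + 1/2 + s) = Bb t := by
    rw [Bb_rec, ← hsdef]; linear_combination -hs
  rw [F, F]
  field_simp
  linear_combination (-2) * hprod

lemma g_nonneg (t : ℕ) : 0 ≤ F (t+1) - F t := by
  have hb := Bb_pos t
  have hs := sqrt_ge_half (Bb t)
  rw [g_eq]
  apply div_nonneg _ hb.le
  linarith

lemma F_mono : Monotone F := by
  apply monotone_nat_of_le_succ
  intro t
  linarith [g_nonneg t]

lemma g_antitone_succ (t : ℕ) : F (t+2) - F (t+1) ≤ F (t+1) - F t := by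
  have hx := Bb_pos (t+1)
  have hy := Bb_pos t
  have hxy := Bb_succ_le t
  rw [show t+2 = (t+1)+1 from rfl, g_eq, g_eq]
  set x := Bb (t+1)
  set y := Bb t
  have hsx : Real.sqrt (x^2 + 1/4) ^ 2 = x^2 + 1/4 := Real.sq_sqrt (by positivity)
  have hsy : Real.sqrt (y^2 + 1/4) ^ 2 = y^2 + 1/4 := Real.sq_sqrt (by positivity)
  have hsx2 := sqrt_ge_half x
  have hsy2 := sqrt_ge_half y
  have hsx0 : 0 ≤ Real.sqrt (x^2 + 1/4) := Real.sqrt_nonneg _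
  have hsy0 : 0 ≤ Real.sqrt (y^2 + 1/4) := Real.sqrt_nonneg _
  set sx := Real.sqrt (x^2 + 1/4)
  set sy := Real.sqrt (y^2 + 1/4)
  have h2 : (y*sx)^2 ≤ (x*sy + (y-x)/2)^2 := by
    nlinarith [mul_nonneg (mul_nonneg hx.le (by linarith : (0:ℝ) ≤ y - x))
      (by linarith : (0:ℝ) ≤ sy - 1/2), hsx, hsy]
  have hA0 : 0 ≤ y*sx := mul_nonneg hy.le hsx0
  have hC0 : 0 ≤ x*sy + (y-x)/2 := by
    have := mul_nonneg hx.le hsy0; linarith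
  have key : y * sx ≤ x * sy + (y-x)/2 := by
    nlinarith [h2, hA0, hC0]
  rw [div_le_div_iff₀ hx hy]
  nlinarith [key]

lemma g_antitone : ∀ s u : ℕ, s ≤ u → F (u+1) - F u ≤ F (s+1) - F s := by
  intro s u h
  induction u with
  | zero =>
    have : s = 0 := Nat.le_zero.mp h
    subst this; exact le_refl _
  | succ u ih =>
    rcases Nat.eq_or_lt_of_le h with rfl | h'
    · exact le_refl _
    · have hsu : s ≤ u := Nat.lt_succ_iff.mp h'
      calc F (u+1+1) - F (u+1) ≤ F (u+1) - F u := g_antitone_succ u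
        _ ≤ _ := ih hsu

lemma F_diff (k : ℕ) : ∀ s u : ℕ, s ≤ u → F (u+k) - F u ≤ F (s+k) - F s := by
  induction k with
  | zero => intro s u _; simp
  | succ k ih =>
    intro s u h
    have h1 := ih s u h
    have h2 := g_antitone (s+k) (u+k) (by omega)
    have e1 : u + (k+1) = (u+k) + 1 := by omega
    have e2 : s + (k+1) = (s+k) + 1 := by omega
    rw [e1, e2]
    linarith

lemma enc_mono {n : ℕ} {S T : Finset (Fin n)} (h : S ⊆ T) : enc S ≤ enc T :=
  Finset.sum_le_sum_of_subset h

lemma fSet_eq_F {n : ℕ} (S : Finset (Fin n)) : fSet S = F (enc S) := rfl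

theorem fSet_monotone_submodular (n : ℕ) :
    (∀ S T : Finset (Fin n), S ⊆ T → fSet S ≤ fSet T) ∧
    (∀ S T : Finset (Fin n), ∀ i : Fin n, S ⊆ T → i ∉ T →
      fSet (insert i S) - fSet S ≥ fSet (insert i T) - fSet T) := by
  constructor
  · intro S T h
    rw [fSet_eq_F, fSet_eq_F]
    exact F_mono (enc_mono h)
  · intro S T i hST hiT
    have hiS : i ∉ S := fun h => hiT (hST h)
    rw [fSet_eq_F, fSet_eq_F, fSet_eq_F, fSet_eq_F]
    rw [show enc (insert i S) = enc S + 2^(i:ℕ) by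
        rw [enc, Finset.sum_insert hiS]; exact Nat.add_comm _ _,
      show enc (insert i T) = enc T + 2^(i:ℕ) by
        rw [enc, Finset.sum_insert hiT]; exact Nat.add_comm _ _]
    exact F_diff (2^(i:ℕ)) (enc S) (enc T) (enc_mono hST)
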